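/- Let C be a precovering subcategory of right R-modules that contains all projective modules and is closed under extensions, with an Ext-injective weak cogenerator C_0 (C_0 ∈ C, Ext^{i≥1}_R(X, C_0) = 0 for all X ∈ C, and every M ∈ C embeds in a module in Prod(C_0) with cokernel in C). Then every module N with Ext^{i≥1}_R(X,N) = 0 for all X ∈ C admits an exact sequence ⋯ → C_1 → C_0' → N → 0 with each C_i ∈ Prod(C_0) ∩ C and all kernels satisfying Ext^{i≥1}_R(X, ker) = 0 for all X ∈ C. -/

import Mathlib

noncomputable section
open CategoryTheory

universe u

/-- Vanishing of `Ext^i_A(M, N)` for `A`-modules `M`, `N`. -/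
def extVanish (A : Type u) [Ring A] (i : ℕ) (M N : Type u) [AddCommGroup M] [Module A M]
    [AddCommGroup N] [Module A N] : Prop :=
  Subsingleton
    (((Ext ℤ (ModuleCat.{u} A) i).obj (Opposite.op (ModuleCat.of A M))).obj (ModuleCat.of A N))

/-- `M` is a direct summand of a direct product of copies of `T` (as `A`-modules). -/
def InProd (A : Type u) [Ring A] (T : Type u) [AddCommGroup T] [Module A T]
    (M : Type u) [AddCommGroup M] [Module A M] : Prop :=
  ∃ (I : Type u) (ι : M →ₗ[A] (I → T)) (π : (I → T) →ₗ[A] M), π ∘ₗ ι = LinearMap.id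

namespace S13
open Limits
variable {A : Type u} [Ring A]

def CB {X : ModuleCat.{u} A} (P : ProjectiveResolution X) (n : ℕ) (Y : ModuleCat.{u} A) : Prop :=
  ∀ c : P.complex.X (n + 1) ⟶ Y, P.complex.d (n + 2) (n + 1) ≫ c = 0 →
    ∃ h : P.complex.X n ⟶ Y, P.complex.d (n + 1) n ≫ h = c

/-- `Ext^i(X, Y)` vanishes (for bundled modules). -/
def EV (i : ℕ) (X Y : ModuleCat.{u} A) : Prop :=
  Subsingleton (((Ext ℤ (ModuleCat.{u} A) i).obj (Opposite.op X)).obj Y)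

def Perp (𝒞 : ModuleCat.{u} A → Prop) (N : ModuleCat.{u} A) : Prop :=
  ∀ X : ModuleCat.{u} A, 𝒞 X → ∀ i : ℕ, 1 ≤ i → EV i X N

lemma subsingleton_of_isZero {M : ModuleCat.{u} ℤ} (h : IsZero M) : Subsingleton M :=
  ⟨fun a b => by
    have h1 : (𝟙 M : M ⟶ M) = 0 := h.eq_of_src _ _
    calc a = (𝟙 M : M ⟶ M) a := rfl
      _ = (0 : M →ₗ[ℤ] M) a := by rw [h1]; rfl
      _ = (0 : M →ₗ[ℤ] M) b := by simp
      _ = (𝟙 M : M ⟶ M) b := by rw [h1]; rfl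
      _ = b := rfl⟩

lemma ext_subsingleton_iff_cb {X : ModuleCat.{u} A} (P : ProjectiveResolution X)
    (Y : ModuleCat.{u} A) (n : ℕ) :
    Subsingleton (((Ext ℤ (ModuleCat.{u} A) (n + 1)).obj (Opposite.op X)).obj Y) ↔ CB P n Y := by
  have e : (((Ext ℤ (ModuleCat.{u} A) (n + 1)).obj (Opposite.op X)).obj Y : Type u) ≃
      ((P.complex.linearYonedaObj ℤ Y).homology (n + 1) : Type u) :=
    ((forget (ModuleCat.{u} ℤ)).mapIso (P.isoExt (n + 1) Y)).toEquiv
  rw [Equiv.subsingleton_congr e]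
  set K := P.complex.linearYonedaObj ℤ Y with hK
  have h2 : Subsingleton (K.homology (n + 1)) ↔ IsZero (K.homology (n + 1)) :=
    ⟨fun h => @ModuleCat.isZero_of_subsingleton _ _ _ h, subsingleton_of_isZero⟩
  rw [h2, ← HomologicalComplex.exactAt_iff_isZero_homology,
    K.exactAt_iff' n (n + 1) (n + 2) (by simp) (by simp),
    ShortComplex.moduleCat_exact_iff]
  exact Iff.rfl


lemma ev_iff_cb {X : ModuleCat.{u} A} (P : ProjectiveResolution X) (Y : ModuleCat.{u} A) (n : ℕ) :
    EV (n + 1) X Y ↔ CB P n Y := ext_subsingleton_iff_cb P Y n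

lemma comp_app {M N U : ModuleCat.{u} A} (f : M ⟶ N) (g : N ⟶ U) (x : M) :
    (f ≫ g) x = g (f x) := rfl

lemma cb_retract {X : ModuleCat.{u} A} {P : ProjectiveResolution X} {n : ℕ}
    {W M : ModuleCat.{u} A} (ι : M ⟶ W) (π : W ⟶ M) (hπι : ι ≫ π = 𝟙 M)
    (h : CB P n W) : CB P n M := by
  intro c hc
  obtain ⟨e, he⟩ := h (c ≫ ι) (by rw [← Category.assoc, hc, Limits.zero_comp])
  exact ⟨e ≫ π, by rw [← Category.assoc, he, Category.assoc, hπι, Category.comp_id]⟩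

lemma cb_pi {X : ModuleCat.{u} A} {P : ProjectiveResolution X} {n : ℕ}
    (C₀ : Type u) [AddCommGroup C₀] [Module A C₀]
    (h : CB P n (ModuleCat.of A C₀)) (I : Type u) :
    CB P n (ModuleCat.of A (I → C₀)) := by
  intro c hc
  have hco : ∀ j : I, P.complex.d (n + 2) (n + 1) ≫
      (c ≫ ModuleCat.ofHom (LinearMap.proj j : (I → C₀) →ₗ[A] C₀)) = 0 := by
    intro j
    rw [← Category.assoc, hc, Limits.zero_comp]
  choose h' hh' using fun j : I => h _ (hco j)
  refine ⟨ModuleCat.ofHom (LinearMap.pi fun j => (h' j).hom), ?_⟩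
  apply ModuleCat.hom_ext
  apply LinearMap.ext
  intro x
  funext j
  have := congrArg (fun (φ : P.complex.X (n+1) ⟶ _) => φ x) (hh' j)
  simpa using this

lemma cb_ker {X : ModuleCat.{u} A} {P : ProjectiveResolution X}
    {W N : ModuleCat.{u} A} (g : W ⟶ N) (hg : Function.Surjective g)
    (hW : ∀ n : ℕ, CB P n W) (hN : ∀ n : ℕ, CB P n N)
    (hlift : ∀ φ : X ⟶ N, ∃ ψ : X ⟶ W, ψ ≫ g = φ) (n : ℕ) :
    CB P n (ModuleCat.of A (LinearMap.ker g.hom)) := by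
  haveI : Epi g := (ModuleCat.epi_iff_surjective g).2 hg
  set sub : ModuleCat.of A (LinearMap.ker g.hom) ⟶ W :=
    ModuleCat.ofHom (LinearMap.ker g.hom).subtype with hsub
  have hsubg : sub ≫ g = 0 := by
    apply ModuleCat.hom_ext; apply LinearMap.ext; intro x; exact x.2
  intro c hc
  obtain ⟨a, ha⟩ := hW n (c ≫ sub) (by rw [← Category.assoc, hc, Limits.zero_comp])
  have hb : P.complex.d (n + 1) n ≫ (a ≫ g) = 0 := by
    rw [← Category.assoc, ha, Category.assoc, hsubg, Limits.comp_zero]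
  -- produce `a' : P.complex.X n ⟶ W` with `a' ≫ g = 0` and `d (n+1) n ≫ a' = c ≫ sub`
  suffices h : ∃ a' : P.complex.X n ⟶ W, a' ≫ g = 0 ∧
      P.complex.d (n + 1) n ≫ a' = c ≫ sub by
    obtain ⟨a', ha'g, ha'd⟩ := h
    refine ⟨ModuleCat.ofHom (LinearMap.codRestrict _ a'.hom
      (fun x => ?_)), ?_⟩
    · exact congrArg (fun (φ : P.complex.X n ⟶ N) => φ x) ha'g
    · apply ModuleCat.hom_ext; apply LinearMap.ext; intro x
      apply Subtype.ext
      exact congrArg (fun (φ : P.complex.X (n+1) ⟶ W) => φ x) ha'd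
  cases n with
  | zero =>
      -- `a ≫ g` factors through `X`
      have hπ0 : (P.complex.d 1 0 ≫ P.π.f 0 : P.complex.X 1 ⟶ X) = 0 := by
        exact P.complex_d_comp_π_f_zero
      obtain ⟨φ, hφ⟩ : ∃ φ : X ⟶ N, (P.π.f 0 : P.complex.X 0 ⟶ X) ≫ φ = a ≫ g := by
        obtain ⟨l, hl⟩ := CokernelCofork.IsColimit.desc' P.isColimitCokernelCofork (a ≫ g) hb
        exact ⟨l, hl⟩
      obtain ⟨ψ, hψ⟩ := hlift φ
      refine ⟨a - (P.π.f 0 : P.complex.X 0 ⟶ X) ≫ ψ, ?_, ?_⟩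
      · erw [Preadditive.sub_comp, Category.assoc, hψ, hφ, sub_self]
      · erw [Preadditive.comp_sub, ← Category.assoc, hπ0, Limits.zero_comp, sub_zero, ha]
  | succ m =>
      obtain ⟨e, he⟩ := hN m (a ≫ g) hb
      set e' : P.complex.X m ⟶ W := Projective.factorThru e g with he'
      refine ⟨a - P.complex.d (m + 1) m ≫ e', ?_, ?_⟩
      · rw [Preadditive.sub_comp, Category.assoc, he', Projective.factorThru_comp, he, sub_self]
      · rw [Preadditive.comp_sub, ← Category.assoc, HomologicalComplex.d_comp_d,
          Limits.zero_comp, sub_zero, ha]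


/-- Factor a map killing `d 1 0` through the augmentation. -/
lemma res_fac {X Y : ModuleCat.{u} A} (P : ProjectiveResolution X) (b : P.complex.X 0 ⟶ Y)
    (hb : P.complex.d 1 0 ≫ b = 0) :
    ∃ φ : X ⟶ Y, (P.π.f 0 : P.complex.X 0 ⟶ X) ≫ φ = b := by
  obtain ⟨l, hl⟩ := CokernelCofork.IsColimit.desc' P.isColimitCokernelCofork b hb
  exact ⟨l, hl⟩

lemma surj_of_lift {N C' : ModuleCat.{u} A} (g : C' ⟶ N)
    (h : ∃ k : ModuleCat.of A ((N : Type u) →₀ A) ⟶ C',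
      k ≫ g = ModuleCat.ofHom (Finsupp.linearCombination A (@_root_.id (N : Type u)))) :
    Function.Surjective g := by
  obtain ⟨k, hk⟩ := h
  intro y
  obtain ⟨x, hx⟩ := Finsupp.linearCombination_id_surjective A (N : Type u) y
  exact ⟨k x, by
    have := congrArg (fun φ : ModuleCat.of A ((N : Type u) →₀ A) ⟶ N => φ x) hk
    simpa using this.trans hx⟩

lemma projective_finsupp (N : ModuleCat.{u} A) :
    Module.Projective A ((N : Type u) →₀ A) := inferInstance

lemma extend_along {C' W M' N : ModuleCat.{u} A}
    (f : C' ⟶ W) (hf : Function.Injective f)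
    (g : W ⟶ M') (hg : Function.Surjective g)
    (hfg : LinearMap.range f.hom = LinearMap.ker g.hom)
    (hExt : ∀ P : ProjectiveResolution M', CB P 0 N)
    (u : C' ⟶ N) : ∃ v : W ⟶ N, f ≫ v = u := by
  classical
  set S : Submodule A ((W × N : Type u)) :=
    LinearMap.range (LinearMap.prod f.hom (-u.hom)) with hS
  set Q : ModuleCat.{u} A := ModuleCat.of A (((W × N : Type u)) ⧸ S) with hQ
  set ι : N ⟶ Q := ModuleCat.ofHom (S.mkQ ∘ₗ LinearMap.inr A (W : Type u) (N : Type u)) with hι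
  set j : W ⟶ Q := ModuleCat.ofHom (S.mkQ ∘ₗ LinearMap.inl A (W : Type u) (N : Type u)) with hj
  have hSle : S ≤ LinearMap.ker (g.hom ∘ₗ LinearMap.fst A (W : Type u) (N : Type u)) := by
    rintro ⟨w, n⟩ ⟨x, hx⟩
    have hw : f x = w := congrArg Prod.fst hx
    rw [LinearMap.mem_ker]
    show g w = 0
    rw [← hw]
    have : f x ∈ LinearMap.ker g.hom := hfg ▸ LinearMap.mem_range_self _ x
    exact this
  set p : Q ⟶ M' := ModuleCat.ofHom
    (S.liftQ (g.hom ∘ₗ LinearMap.fst A (W : Type u) (N : Type u)) hSle) with hp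
  have hjp : ∀ w : W, p (j w) = g w := fun w => rfl
  have hιp : ∀ n : N, p (ι n) = 0 := fun n => map_zero g.hom
  have hmem : ∀ x : C', ((f x, -(u x)) : (W × N : Type u)) ∈ S :=
    fun x => ⟨x, rfl⟩
  have hfju : ∀ x : C', j (f x) = ι (u x) := by
    intro x
    show S.mkQ (f x, 0) = S.mkQ (0, u x)
    rw [Submodule.mkQ_apply, Submodule.mkQ_apply, Submodule.Quotient.eq]
    simpa using hmem x
  have hι_inj : Function.Injective ι := by
    rw [injective_iff_map_eq_zero]
    intro n hn
    have : ((0, n) : (W × N : Type u)) ∈ S := by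
      rwa [← Submodule.Quotient.mk_eq_zero S]
    obtain ⟨x, hx⟩ := this
    have hfx : f x = 0 := congrArg Prod.fst hx
    have hx0 : x = 0 := hf (by rw [hfx]; exact (map_zero _).symm)
    have := congrArg Prod.snd hx
    simp only [hx0] at this
    simpa using this.symm
  have hp_surj : Function.Surjective p := by
    intro m
    obtain ⟨w, hw⟩ := hg m
    exact ⟨j w, by rw [hjp]; exact hw⟩
  have hkerp : ∀ q : Q, p q = 0 → ∃ n : N, ι n = q := by
    intro q hq
    obtain ⟨⟨w, n⟩, rfl⟩ := S.mkQ_surjective q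
    have hgw : g w = 0 := hq
    have : w ∈ LinearMap.range f.hom := hfg ▸ hgw
    obtain ⟨x, rfl⟩ := this
    refine ⟨n + u x, ?_⟩
    show S.mkQ (0, n + u x) = S.mkQ (f x, n)
    rw [Submodule.mkQ_apply, Submodule.mkQ_apply, Submodule.Quotient.eq]
    have := S.neg_mem (hmem x)
    simpa [Prod.ext_iff] using this
  haveI hEpi_p : Epi p := (ModuleCat.epi_iff_surjective p).2 hp_surj
  set P' : ProjectiveResolution M' := ProjectiveResolution.of M' with hP'
  set σ : P'.complex.X 0 ⟶ Q := Projective.factorThru (X := M') (P'.π.f 0 : P'.complex.X 0 ⟶ M') p with hσdef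
  have hσ : σ ≫ p = (P'.π.f 0 : P'.complex.X 0 ⟶ M') := Projective.factorThru_comp (X := M') _ _
  have hdσp : ∀ x : P'.complex.X 1, p ((P'.complex.d 1 0 ≫ σ) x) = 0 := by
    intro x
    have : (P'.complex.d 1 0 ≫ σ) ≫ p = 0 := by
      rw [Category.assoc, hσ]
      exact P'.complex_d_comp_π_f_zero
    exact congrArg (fun φ : P'.complex.X 1 ⟶ M' => φ x) this
  set e := LinearEquiv.ofInjective ι.hom hι_inj with he
  have hsymm : ∀ y : LinearMap.range ι.hom,
      ι.hom (e.symm y) = (y : Q) := by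
    intro y
    conv_rhs => rw [← e.apply_symm_apply y]
    rfl
  set τ : P'.complex.X 1 ⟶ N := ModuleCat.ofHom (e.symm.toLinearMap ∘ₗ
    LinearMap.codRestrict (LinearMap.range ι.hom)
      ((P'.complex.d 1 0 ≫ σ : P'.complex.X 1 ⟶ Q)).hom
      (fun x => by
        obtain ⟨n, hn⟩ := hkerp _ (hdσp x)
        exact ⟨n, hn⟩)) with hτdef
  have hτι : ∀ x : P'.complex.X 1, ι (τ x) = (P'.complex.d 1 0 ≫ σ) x := by
    intro x
    exact hsymm _
  have hdτ : P'.complex.d 2 1 ≫ τ = 0 := by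
    apply ModuleCat.hom_ext
    apply LinearMap.ext
    intro x
    apply hι_inj
    show ι (τ (P'.complex.d 2 1 x)) = ι 0
    rw [hτι]
    have h0 : (P'.complex.d 2 1 ≫ (P'.complex.d 1 0 ≫ σ)) = 0 := by
      rw [← Category.assoc, HomologicalComplex.d_comp_d, Limits.zero_comp]
    have := congrArg (fun φ : P'.complex.X 2 ⟶ Q => φ x) h0
    simp only [map_zero]
    exact this
  obtain ⟨h₀, hh₀⟩ := hExt P' τ hdτ
  set s' : P'.complex.X 0 ⟶ Q := σ - h₀ ≫ ι with hs'def
  have hds' : P'.complex.d 1 0 ≫ s' = 0 := by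
    rw [hs'def, Preadditive.comp_sub, ← Category.assoc, hh₀]
    apply ModuleCat.hom_ext
    apply LinearMap.ext
    intro x
    show (P'.complex.d 1 0 ≫ σ) x - ι (τ x) = 0
    rw [hτι, sub_self]
  obtain ⟨s, hs⟩ := res_fac P' s' hds'
  have hιp0 : ι ≫ p = 0 := ModuleCat.hom_ext (LinearMap.ext fun n => hιp n)
  have hsp : s ≫ p = 𝟙 M' := by
    refine (cancel_epi (P'.π.f 0 : P'.complex.X 0 ⟶ M')).1 ?_
    erw [← Category.assoc, hs, hs'def, Preadditive.sub_comp, hσ,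
      Category.assoc, hιp0, Limits.comp_zero, sub_zero]
    exact (Category.comp_id (P'.π.f 0)).symm
  have hsp' : ∀ m : M', p (s m) = m := fun m =>
    congrArg (fun φ : M' ⟶ M' => φ m) hsp
  set t : (Q : Type u) →ₗ[A] (Q : Type u) :=
    LinearMap.id - (s.hom ∘ₗ p.hom) with htdef
  have htapp : ∀ q : (Q : Type u), t q = q - s (p q) := by
    intro q
    simp [htdef, LinearMap.sub_apply, LinearMap.comp_apply]
  have hpt : ∀ q : (Q : Type u), p (t q) = 0 := by
    intro q
    rw [htapp, map_sub, hsp', sub_self]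
  set r : Q ⟶ N := ModuleCat.ofHom (e.symm.toLinearMap ∘ₗ
    LinearMap.codRestrict (LinearMap.range ι.hom) t
      (fun q => hkerp _ (hpt q))) with hrdef
  have hr : ∀ q : (Q : Type u), ι (r q) = t q := fun q => hsymm _
  have hrι : ∀ n : (N : Type u), r (ι n) = n := by
    intro n
    apply hι_inj
    rw [hr, htapp, hιp, map_zero, sub_zero]
  refine ⟨j ≫ r, ?_⟩
  apply ModuleCat.hom_ext
  apply LinearMap.ext
  intro x
  show r (j (f x)) = u x
  rw [hfju, hrι]


lemma step {𝒞 : ModuleCat.{u} A → Prop}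
    (hproj : ∀ P : ModuleCat.{u} A, Module.Projective A P → 𝒞 P)
    (hext : ∀ (X Y Z : ModuleCat.{u} A) (f : X →ₗ[A] Y) (g : Y →ₗ[A] Z),
      Function.Injective f → Function.Surjective g → Function.Exact f g →
      𝒞 X → 𝒞 Z → 𝒞 Y)
    (C₀ : Type u) [AddCommGroup C₀] [Module A C₀]
    (hExtInj : ∀ X : ModuleCat.{u} A, 𝒞 X → ∀ i : ℕ, 1 ≤ i → EV i X (ModuleCat.of A C₀))
    (hweak : ∀ M : ModuleCat.{u} A, 𝒞 M →
      ∃ (W M' : ModuleCat.{u} A) (f : M →ₗ[A] W) (g : W →ₗ[A] M'),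
        InProd A C₀ W ∧ 𝒞 M' ∧
        Function.Injective f ∧ Function.Surjective g ∧ Function.Exact f g)
    (hprecover : ∀ N : ModuleCat.{u} A, ∃ (C' : ModuleCat.{u} A)
      (g : C' →ₗ[A] N), 𝒞 C' ∧
        ∀ X : ModuleCat.{u} A, 𝒞 X → ∀ h : X →ₗ[A] N,
          ∃ k : X →ₗ[A] C', g ∘ₗ k = h)
    (N : ModuleCat.{u} A) (hN : Perp 𝒞 N) :
    ∃ (W : ModuleCat.{u} A) (v : W →ₗ[A] N),
      (InProd A C₀ W ∧ 𝒞 W) ∧ Function.Surjective v ∧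
        Perp 𝒞 (ModuleCat.of A (LinearMap.ker v)) := by
  obtain ⟨C', g, hC', hlift⟩ := hprecover N
  have hg_surj : Function.Surjective g := by
    apply surj_of_lift (show C' ⟶ N from ModuleCat.ofHom g)
    obtain ⟨k, hk⟩ := hlift (ModuleCat.of A ((N : Type u) →₀ A))
      (hproj _ (projective_finsupp N)) (Finsupp.linearCombination A (@_root_.id (N : Type u)))
    exact ⟨ModuleCat.ofHom k, congrArg ModuleCat.ofHom hk⟩
  obtain ⟨W, M', ι, q, hWprod, hM', hι_inj, hq_surj, hιq⟩ := hweak C' hC'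
  have hW𝒞 : 𝒞 W := hext C' W M' ι q hι_inj hq_surj hιq hC' hM'
  have hExtM' : ∀ P : ProjectiveResolution M', CB P 0 N := fun P =>
    (ev_iff_cb P N 0).1 (hN M' hM' 1 le_rfl)
  obtain ⟨v, hv⟩ := extend_along (show C' ⟶ W from ModuleCat.ofHom ι) hι_inj (show W ⟶ M' from ModuleCat.ofHom q) hq_surj
    (LinearMap.exact_iff.1 hιq).symm hExtM' (show C' ⟶ N from ModuleCat.ofHom g)
  have hv_surj : Function.Surjective v := by
    intro y
    obtain ⟨x, hx⟩ := hg_surj y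
    exact ⟨ι x, by
      have := congrArg (fun φ : C' ⟶ N => φ x) hv
      simpa using this.trans hx⟩
  refine ⟨W, v.hom, ⟨hWprod, hW𝒞⟩, hv_surj, ?_⟩
  intro X hX i hi
  obtain ⟨n, rfl⟩ : ∃ n, i = n + 1 := ⟨i - 1, (Nat.succ_pred_eq_of_pos hi).symm⟩
  set P : ProjectiveResolution X := ProjectiveResolution.of X with hP
  rw [ev_iff_cb P]
  refine cb_ker (g := (v : W ⟶ N)) hv_surj ?_ ?_ ?_ n
  · intro m
    obtain ⟨I, ι', π', hπι'⟩ := hWprod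
    have h1 : CB P m (ModuleCat.of A C₀) :=
      (ev_iff_cb P _ m).1 (hExtInj X hX (m + 1) (Nat.succ_le_succ (Nat.zero_le m)))
    exact cb_retract (show (W : ModuleCat.{u} A) ⟶ ModuleCat.of A (I → C₀) from ModuleCat.ofHom ι')
      (show ModuleCat.of A (I → C₀) ⟶ W from ModuleCat.ofHom π')
      (show _ = 𝟙 (W : ModuleCat.{u} A) from congrArg ModuleCat.ofHom hπι') (cb_pi C₀ h1 I)
  · intro m
    exact (ev_iff_cb P N m).1 (hN X hX (m + 1) (Nat.succ_le_succ (Nat.zero_le m)))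
  · intro φ
    obtain ⟨k, hk⟩ := hlift X hX φ.hom
    refine ⟨(show X ⟶ C' from ModuleCat.ofHom k) ≫ (show C' ⟶ W from ModuleCat.ofHom ι), ?_⟩
    rw [Category.assoc, hv]
    exact ModuleCat.hom_ext hk

end S13

open S13 in
theorem exists_prod_resolution_of_mem_perp (R : Type u) [Ring R]
    (𝒞 : ModuleCat.{u} Rᵐᵒᵖ → Prop)
    -- `𝒞` is precovering:
    (hprecover : ∀ N : ModuleCat.{u} Rᵐᵒᵖ, ∃ (C' : ModuleCat.{u} Rᵐᵒᵖ)
      (g : C' →ₗ[Rᵐᵒᵖ] N), 𝒞 C' ∧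
        ∀ X : ModuleCat.{u} Rᵐᵒᵖ, 𝒞 X → ∀ h : X →ₗ[Rᵐᵒᵖ] N,
          ∃ k : X →ₗ[Rᵐᵒᵖ] C', g ∘ₗ k = h)
    -- `𝒞` contains all projective modules:
    (hproj : ∀ P : ModuleCat.{u} Rᵐᵒᵖ, Module.Projective Rᵐᵒᵖ P → 𝒞 P)
    -- `𝒞` is closed under extensions:
    (hext : ∀ (X Y Z : ModuleCat.{u} Rᵐᵒᵖ) (f : X →ₗ[Rᵐᵒᵖ] Y) (g : Y →ₗ[Rᵐᵒᵖ] Z),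
      Function.Injective f → Function.Surjective g → Function.Exact f g →
      𝒞 X → 𝒞 Z → 𝒞 Y)
    -- `C₀` is an Ext-injective weak cogenerator for `𝒞`:
    (C₀ : Type u) [AddCommGroup C₀] [Module Rᵐᵒᵖ C₀]
    (hC₀ : 𝒞 (ModuleCat.of Rᵐᵒᵖ C₀))
    (hExtInj : ∀ X : ModuleCat.{u} Rᵐᵒᵖ, 𝒞 X → ∀ i : ℕ, 1 ≤ i → extVanish Rᵐᵒᵖ i X C₀)
    (hweak : ∀ M : ModuleCat.{u} Rᵐᵒᵖ, 𝒞 M →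
      ∃ (W M' : ModuleCat.{u} Rᵐᵒᵖ) (f : M →ₗ[Rᵐᵒᵖ] W) (g : W →ₗ[Rᵐᵒᵖ] M'),
        InProd Rᵐᵒᵖ C₀ W ∧ 𝒞 M' ∧
        Function.Injective f ∧ Function.Surjective g ∧ Function.Exact f g)
    -- conclusion:
    (N : ModuleCat.{u} Rᵐᵒᵖ)
    (hN : ∀ X : ModuleCat.{u} Rᵐᵒᵖ, 𝒞 X → ∀ i : ℕ, 1 ≤ i → extVanish Rᵐᵒᵖ i X N) :
    ∃ (C : ℕ → ModuleCat.{u} Rᵐᵒᵖ) (f : C 0 →ₗ[Rᵐᵒᵖ] N)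
      (d : ∀ n, C (n + 1) →ₗ[Rᵐᵒᵖ] C n),
      (∀ n, InProd Rᵐᵒᵖ C₀ (C n) ∧ 𝒞 (C n)) ∧
      Function.Surjective f ∧
      Function.Exact (d 0) f ∧
      (∀ n, Function.Exact (d (n + 1)) (d n)) ∧
      (∀ X : ModuleCat.{u} Rᵐᵒᵖ, 𝒞 X → ∀ i : ℕ, 1 ≤ i →
        extVanish Rᵐᵒᵖ i X (LinearMap.ker f)) ∧
      (∀ n, ∀ X : ModuleCat.{u} Rᵐᵒᵖ, 𝒞 X → ∀ i : ℕ, 1 ≤ i →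
        extVanish Rᵐᵒᵖ i X (LinearMap.ker (d n))) := by
  classical
  have hN' : Perp 𝒞 N := fun X hX i hi => hN X hX i hi
  have hExtInj' : ∀ X : ModuleCat.{u} Rᵐᵒᵖ, 𝒞 X → ∀ i : ℕ, 1 ≤ i →
      EV i X (ModuleCat.of Rᵐᵒᵖ C₀) := fun X hX i hi => hExtInj X hX i hi
  have key := fun (N' : ModuleCat.{u} Rᵐᵒᵖ) (hN'' : Perp 𝒞 N') =>
    step hproj hext C₀ hExtInj' hweak hprecover N' hN''
  let D : (T : Σ' N' : ModuleCat.{u} Rᵐᵒᵖ, Perp 𝒞 N') →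
      Σ' (W : ModuleCat.{u} Rᵐᵒᵖ) (v : W →ₗ[Rᵐᵒᵖ] T.1),
        (InProd Rᵐᵒᵖ C₀ W ∧ 𝒞 W) ∧ Function.Surjective v ∧
          Perp 𝒞 (ModuleCat.of Rᵐᵒᵖ (LinearMap.ker v)) :=
    fun T => ⟨(key T.1 T.2).choose, (key T.1 T.2).choose_spec.choose,
      (key T.1 T.2).choose_spec.choose_spec⟩
  let T : ℕ → Σ' N' : ModuleCat.{u} Rᵐᵒᵖ, Perp 𝒞 N' :=
    fun n => Nat.rec ⟨N, hN'⟩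
      (fun _ ih => ⟨ModuleCat.of Rᵐᵒᵖ (LinearMap.ker (D ih).2.1), (D ih).2.2.2.2⟩) n
  let C : ℕ → ModuleCat.{u} Rᵐᵒᵖ := fun n => (D (T n)).1
  let h : ∀ n, C n →ₗ[Rᵐᵒᵖ] (T n).1 := fun n => (D (T n)).2.1
  have hsurj : ∀ n, Function.Surjective (h n) := fun n => (D (T n)).2.2.2.1
  have hker : ∀ n, Perp 𝒞 (ModuleCat.of Rᵐᵒᵖ (LinearMap.ker (h n))) :=
    fun n => (D (T n)).2.2.2.2
  refine ⟨C, h 0, fun n => (LinearMap.ker (h n)).subtype ∘ₗ h (n + 1),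
    fun n => (D (T n)).2.2.1, hsurj 0, ?_, ?_, ?_, ?_⟩
  · rw [LinearMap.exact_iff, LinearMap.range_comp,
      LinearMap.range_eq_top.2 (hsurj 1), Submodule.map_top, Submodule.range_subtype]
  · intro n
    rw [LinearMap.exact_iff, LinearMap.ker_comp, Submodule.ker_subtype, Submodule.comap_bot,
      LinearMap.range_comp, LinearMap.range_eq_top.2 (hsurj (n + 2)), Submodule.map_top,
      Submodule.range_subtype]
  · exact fun X hX i hi => hker 0 X hX i hi
  · intro n X hX i hi
    rw [show LinearMap.ker ((LinearMap.ker (h n)).subtype ∘ₗ h (n + 1)) =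
      LinearMap.ker (h (n + 1)) from by
        rw [LinearMap.ker_comp, Submodule.ker_subtype, Submodule.comap_bot]]
    exact hker (n + 1) X hX i hi

end
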